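/- arXiv:math/0409197 — 3 statements merged into one kernel-verified Lean document; each statement's English description precedes it below -/
import Mathlib

section
/- For any parameter θ = (α_1, a_1, b_1, …, α_M, a_M, b_M) ∈ Θ there exists a parameter θ' = (α_1, a_1', b_1', …, α_M, a_M', b_M') ∈ Θ with the same mixing weights, satisfying L_min ≤ a_m' ≤ L_max and 0 < b_m' ≤ L for all m, such that Σ_{m=1}^M α_m f(x; a_m', b_m') ≥ Σ_{m=1}^M α_m f(x; a_m, b_m) for all x ∈ [L_min, L_max); moreover equality (for all x ∈ [L_min, L_max)) does not hold if there exists m with α_m > 0 such that a_m ∉ [L_min, L_max] or b_m > L. -/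
open MeasureTheory Set

/-- The uniform density with center `a` and half-width `b`, supported on `[a - b, a + b)`. -/
noncomputable def unifPdf (a b x : ℝ) : ℝ :=
  if a - b ≤ x ∧ x < a + b then 1 / (2 * b) else 0

/-- Mixture of `M` uniform densities; `θ (m, 0)` is `α_m`, `θ (m, 1)` is `a_m`,
`θ (m, 2)` is `b_m`. -/
noncomputable def mixPdf (M : ℕ) (θ : EuclideanSpace ℝ (Fin M × Fin 3)) (x : ℝ) : ℝ :=
  ∑ m : Fin M, θ (m, 0) * unifPdf (θ (m, 1)) (θ (m, 2)) x

/-- The parameter space `Θ`. -/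
def mixParams (M : ℕ) : Set (EuclideanSpace ℝ (Fin M × Fin 3)) :=
  {θ | (∀ m, 0 ≤ θ (m, 0)) ∧ (∑ m : Fin M, θ (m, 0)) = 1 ∧ ∀ m, 0 < θ (m, 2)}

lemma unifPdf_nonneg {a b : ℝ} (hb : 0 < b) (x : ℝ) : 0 ≤ unifPdf a b x := by
  unfold unifPdf; split <;> positivity

/-- **Lemma 1:** for any `θ ∈ Θ` there is `θ' ∈ Θ` with the same mixing weights,
with `L_min ≤ a_m' ≤ L_max` and `0 < b_m' ≤ L`, whose density dominates that of `θ`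
on `[L_min, L_max)`; equality on all of `[L_min, L_max)` fails whenever some component
with positive weight has `a_m ∉ [L_min, L_max]` or `b_m > L`. -/
theorem exists_dominating_param_in_box
    (M : ℕ) (hM : 0 < M) (θ₀ : EuclideanSpace ℝ (Fin M × Fin 3))
    (hθ₀ : θ₀ ∈ mixParams M)
    (Lmin Lmax L : ℝ)
    (hLmin : IsLeast (Set.range fun m : Fin M => θ₀ (m, 1) - θ₀ (m, 2)) Lmin)
    (hLmax : IsGreatest (Set.range fun m : Fin M => θ₀ (m, 1) + θ₀ (m, 2)) Lmax)
    (hL : L = Lmax - Lmin)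
    (θ : EuclideanSpace ℝ (Fin M × Fin 3)) (hθ : θ ∈ mixParams M) :
    ∃ θ' ∈ mixParams M,
      (∀ m : Fin M, θ' (m, 0) = θ (m, 0)) ∧
      (∀ m : Fin M, Lmin ≤ θ' (m, 1) ∧ θ' (m, 1) ≤ Lmax ∧
        0 < θ' (m, 2) ∧ θ' (m, 2) ≤ L) ∧
      (∀ x ∈ Set.Ico Lmin Lmax, mixPdf M θ x ≤ mixPdf M θ' x) ∧
      ((∃ m : Fin M, 0 < θ (m, 0) ∧
          (θ (m, 1) ∉ Set.Icc Lmin Lmax ∨ L < θ (m, 2))) →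
        ¬ ∀ x ∈ Set.Ico Lmin Lmax, mixPdf M θ' x = mixPdf M θ x) := by
  obtain ⟨hα, hsum, hb⟩ := hθ
  obtain ⟨hα₀, hsum₀, hb₀⟩ := hθ₀
  set m₀ : Fin M := ⟨0, hM⟩
  have h1 : Lmin ≤ θ₀ (m₀, 1) - θ₀ (m₀, 2) := hLmin.2 ⟨m₀, rfl⟩
  have h2 : θ₀ (m₀, 1) + θ₀ (m₀, 2) ≤ Lmax := hLmax.2 ⟨m₀, rfl⟩
  have hLL : Lmin < Lmax := by have := hb₀ m₀; linarith
  have hL0 : 0 < L := by rw [hL]; linarith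
  set c : Fin M → ℝ := fun m => max (θ (m, 1) - θ (m, 2)) Lmin with hc
  set d : Fin M → ℝ := fun m => min (θ (m, 1) + θ (m, 2)) Lmax with hd
  set A : Fin M → ℝ := fun m => if c m < d m then (c m + d m) / 2 else (Lmin + Lmax) / 2 with hA
  set B : Fin M → ℝ := fun m => if c m < d m then (d m - c m) / 2 else L / 2 with hB
  set θ' : EuclideanSpace ℝ (Fin M × Fin 3) :=
    WithLp.toLp 2 fun p : Fin M × Fin 3 => if p.2 = 0 then θ (p.1, 0) else if p.2 = 1 then A p.1 else B p.1 with hθ'def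
  have e0 : ∀ m : Fin M, θ' (m, 0) = θ (m, 0) := fun m => rfl
  have e1 : ∀ m : Fin M, θ' (m, 1) = A m := fun m => rfl
  have e2 : ∀ m : Fin M, θ' (m, 2) = B m := fun m => rfl
  have hAeq : ∀ m : Fin M, A m = if c m < d m then (c m + d m) / 2 else (Lmin + Lmax) / 2 :=
    fun m => rfl
  have hBeq : ∀ m : Fin M, B m = if c m < d m then (d m - c m) / 2 else L / 2 :=
    fun m => rfl
  have hBpos : ∀ m, 0 < B m := by
    intro m
    rw [hBeq]; split
    · rename_i h; linarith
    · linarith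
  have hbounds : ∀ m : Fin M, Lmin ≤ A m ∧ A m ≤ Lmax ∧ 0 < B m ∧ B m ≤ L := by
    intro m
    have hcm : Lmin ≤ c m := le_max_right _ _
    have hdm : d m ≤ Lmax := min_le_right _ _
    refine ⟨?_, ?_, hBpos m, ?_⟩
    · rw [hAeq]; split
      · rename_i h; linarith
      · linarith
    · rw [hAeq]; split
      · rename_i h; linarith
      · linarith
    · rw [hBeq]; split
      · rename_i h; rw [hL]; linarith
      · linarith
  -- pointwise domination
  have key : ∀ (m : Fin M), ∀ x ∈ Set.Ico Lmin Lmax,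
      unifPdf (θ (m, 1)) (θ (m, 2)) x ≤ unifPdf (A m) (B m) x := by
    intro m x hx
    obtain ⟨hx1, hx2⟩ := hx
    have hbm := hb m
    by_cases hpos : θ (m, 1) - θ (m, 2) ≤ x ∧ x < θ (m, 1) + θ (m, 2)
    · -- old density is positive
      have hcx : c m ≤ x := max_le hpos.1 hx1
      have hxd : x < d m := lt_min hpos.2 hx2
      have hcd : c m < d m := lt_of_le_of_lt hcx hxd
      have hAB1 : A m - B m = c m := by rw [hAeq, hBeq, if_pos hcd, if_pos hcd]; ring
      have hAB2 : A m + B m = d m := by rw [hAeq, hBeq, if_pos hcd, if_pos hcd]; ring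
      have hdc : d m - c m ≤ 2 * θ (m, 2) := by
        have : θ (m, 1) - θ (m, 2) ≤ c m := le_max_left _ _
        have : d m ≤ θ (m, 1) + θ (m, 2) := min_le_left _ _
        linarith [le_max_left (θ (m, 1) - θ (m, 2)) Lmin]
      unfold unifPdf
      rw [if_pos hpos, if_pos (by rw [hAB1, hAB2]; exact ⟨hcx, hxd⟩)]
      have h2B : 2 * B m = d m - c m := by rw [hBeq, if_pos hcd]; ring
      rw [h2B]
      apply one_div_le_one_div_of_le (by linarith) hdc
    · -- old density is zero
      have h0 : unifPdf (θ (m, 1)) (θ (m, 2)) x = 0 := by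
        unfold unifPdf; rw [if_neg hpos]
      rw [h0]
      exact unifPdf_nonneg (hBpos m) x
  -- mixture domination
  have hmix : ∀ x ∈ Set.Ico Lmin Lmax, mixPdf M θ x ≤ mixPdf M θ' x := by
    intro x hx
    unfold mixPdf
    apply Finset.sum_le_sum
    intro i _
    rw [e0, e1, e2]
    exact mul_le_mul_of_nonneg_left (key i x hx) (hα i)
  refine ⟨θ', ⟨fun m => by rw [e0]; exact hα m, by simp only [e0]; exact hsum,
      fun m => by rw [e2]; exact hBpos m⟩, e0, fun m => by rw [e1, e2]; exact hbounds m, hmix, ?_⟩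
  rintro ⟨m, hαm, hcond⟩ heq
  -- find strict point
  have hbm := hb m
  obtain ⟨x, hx, hstrict⟩ :
      ∃ x ∈ Set.Ico Lmin Lmax, unifPdf (θ (m, 1)) (θ (m, 2)) x < unifPdf (A m) (B m) x := by
    by_cases hcd : c m < d m
    · -- use x = c m; need d m - c m < 2 b
      have hdc : d m - c m < 2 * θ (m, 2) := by
        rcases hcond with h | h
        · rw [Set.mem_Icc, not_and_or, not_le, not_le] at h
          rcases h with h | h
          · have hc' : c m = Lmin := max_eq_right (by linarith)
            have : d m ≤ θ (m, 1) + θ (m, 2) := min_le_left _ _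
            linarith
          · have hd' : d m = Lmax := min_eq_right (by linarith)
            have : θ (m, 1) - θ (m, 2) ≤ c m := le_max_left _ _
            linarith
        · have : d m - c m ≤ L := by
            have := le_max_right (θ (m, 1) - θ (m, 2)) Lmin
            have := min_le_right (θ (m, 1) + θ (m, 2)) Lmax
            rw [hL]; linarith
          linarith
      refine ⟨c m, ⟨le_max_right _ _, lt_of_lt_of_le hcd (min_le_right _ _)⟩, ?_⟩
      have hAB1 : A m - B m = c m := by rw [hAeq, hBeq, if_pos hcd, if_pos hcd]; ring
      have hAB2 : A m + B m = d m := by rw [hAeq, hBeq, if_pos hcd, if_pos hcd]; ring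
      have h2B : 2 * B m = d m - c m := by rw [hBeq, if_pos hcd]; ring
      have hnew : unifPdf (A m) (B m) (c m) = 1 / (d m - c m) := by
        unfold unifPdf
        rw [if_pos (by rw [hAB1, hAB2]; exact ⟨le_refl _, hcd⟩), h2B]
      have hold : unifPdf (θ (m, 1)) (θ (m, 2)) (c m) = 1 / (2 * θ (m, 2)) := by
        unfold unifPdf
        rw [if_pos ⟨le_max_left _ _, lt_of_lt_of_le hcd (min_le_left _ _)⟩]
      rw [hnew, hold]
      exact one_div_lt_one_div_of_lt (by linarith) hdc
    · -- old density vanishes on the whole interval; use x = Lmin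
      refine ⟨Lmin, ⟨le_refl _, hLL⟩, ?_⟩
      have hAB1 : A m - B m = Lmin := by
        rw [hAeq, hBeq, if_neg hcd, if_neg hcd, hL]; ring
      have hAB2 : A m + B m = Lmax := by
        rw [hAeq, hBeq, if_neg hcd, if_neg hcd, hL]; ring
      have h2B : 2 * B m = L := by rw [hBeq, if_neg hcd]; ring
      have hold : unifPdf (θ (m, 1)) (θ (m, 2)) Lmin = 0 := by
        unfold unifPdf
        rw [if_neg]
        rintro ⟨hh1, hh2⟩
        apply hcd
        have : c m = Lmin := max_eq_right hh1
        rw [this]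
        exact lt_min hh2 hLL
      have hnew : unifPdf (A m) (B m) Lmin = 1 / L := by
        unfold unifPdf
        rw [if_pos (by rw [hAB1, hAB2]; exact ⟨le_refl _, hLL⟩), h2B]
      rw [hold, hnew]
      positivity
  have hlt : mixPdf M θ x < mixPdf M θ' x := by
    unfold mixPdf
    apply Finset.sum_lt_sum
    · intro i _
      rw [e0, e1, e2]
      exact mul_le_mul_of_nonneg_left (key i x hx) (hα i)
    · exact ⟨m, Finset.mem_univ m, by
        rw [e0, e1, e2]
        exact mul_lt_mul_of_pos_left hstrict hαm⟩
  exact absurd (heq x hx) (by linarith)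
end

section
/- (Okamoto) Let Z be a random variable with the binomial distribution Bin(n, p). Then for every δ > 0, Prob(Z/n − p ≥ δ) < exp(−2nδ²). -/
open MeasureTheory

lemma bernoulli_mgf_le {p : ℝ} (hp0 : 0 < p) (hp1 : p < 1) {t : ℝ} (ht : 0 ≤ t) :
    p * Real.exp t + (1 - p) ≤ Real.exp (t * p + t ^ 2 / 8) := by
  set q : ℝ := 1 - p with hq
  have hq0 : 0 < q := by simp only [hq]; linarith
  set u : ℝ → ℝ := fun x => p * Real.exp x + q with hudef
  have hu : ∀ x : ℝ, 0 < u x := fun x => by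
    have := Real.exp_pos x; simp only [hudef]; positivity
  set G : ℝ → ℝ := fun x => p + x / 4 - p * Real.exp x / u x with hGdef
  set L : ℝ → ℝ := fun x => x * p + x ^ 2 / 8 - Real.log (u x) with hLdef
  have hderivu : ∀ x : ℝ, HasDerivAt u (p * Real.exp x) x := by
    intro x
    exact ((Real.hasDerivAt_exp x).const_mul p).add_const q
  have hderivG : ∀ x : ℝ, HasDerivAt G
      (1 / 4 - (p * Real.exp x * u x - p * Real.exp x * (p * Real.exp x)) / (u x) ^ 2) x := by
    intro x
    have h1 : HasDerivAt (fun x : ℝ => p + x / 4) (1 / 4) x := by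
      simpa using ((hasDerivAt_id x).div_const 4).const_add p
    have h2 : HasDerivAt (fun x => p * Real.exp x / u x)
        ((p * Real.exp x * u x - p * Real.exp x * (p * Real.exp x)) / (u x) ^ 2) x :=
      ((Real.hasDerivAt_exp x).const_mul p).div (hderivu x) (hu x).ne'
    exact h1.sub h2
  have hGmono : Monotone G := by
    have hdiff : Differentiable ℝ G := fun x => (hderivG x).differentiableAt
    apply monotone_of_deriv_nonneg hdiff
    intro x
    rw [(hderivG x).deriv]
    have hex : 0 < Real.exp x := Real.exp_pos x
    have husq : 0 < (u x) ^ 2 := by positivity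
    rw [sub_nonneg, div_le_iff₀ husq]
    have huval : u x = p * Real.exp x + q := rfl
    nlinarith [sq_nonneg (p * Real.exp x - q)]
  have hG0 : G 0 = 0 := by
    simp only [hGdef, hudef, Real.exp_zero, mul_one, hq]
    have : p + (1 - p) = 1 := by ring
    rw [this]
    ring
  have hGnonneg : ∀ x ∈ Set.Ioi (0:ℝ), 0 ≤ G x := by
    intro x hx
    calc (0:ℝ) = G 0 := hG0.symm
    _ ≤ G x := hGmono (le_of_lt hx)
  have hderivL : ∀ x : ℝ, HasDerivAt L (G x) x := by
    intro x
    have h1 : HasDerivAt (fun x : ℝ => x * p + x ^ 2 / 8) (p + x / 4) x := by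
      have ha := (hasDerivAt_pow 2 x).div_const 8
      have hb := (hasDerivAt_id x).mul_const p
      refine (hb.add ha).congr_deriv ?_
      simp
      ring
    have h2 : HasDerivAt (fun x => Real.log (u x)) (p * Real.exp x / u x) x := by
      have := (Real.hasDerivAt_log (hu x).ne').comp x (hderivu x)
      show HasDerivAt (Real.log ∘ u) _ x
      simpa [div_eq_mul_inv, mul_comm] using this
    exact h1.sub h2
  have hdiffL : Differentiable ℝ L := fun x => (hderivL x).differentiableAt
  have hLmono : MonotoneOn L (Set.Ici 0) := by
    apply monotoneOn_of_deriv_nonneg (convex_Ici 0) hdiffL.continuous.continuousOn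
      (hdiffL.differentiableOn)
    intro x hx
    rw [interior_Ici] at hx
    rw [(hderivL x).deriv]
    exact hGnonneg x hx
  have hL0 : L 0 = 0 := by
    have hu0 : u 0 = 1 := by
      simp only [hudef, Real.exp_zero, mul_one, hq]; ring
    simp [hLdef, hu0]
  have hLt : 0 ≤ L t := by
    calc (0:ℝ) = L 0 := hL0.symm
    _ ≤ L t := hLmono Set.self_mem_Ici ht ht
  have hlog : Real.log (u t) ≤ t * p + t ^ 2 / 8 := by
    simp only [hLdef] at hLt; linarith
  have := (Real.log_le_iff_le_exp (hu t)).mp hlog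
  simpa [hudef] using this

/-- **Okamoto's inequality.** If `Z ~ Bin(n, p)` then for every `δ > 0`,
`Prob(Z/n − p ≥ δ) < exp(−2nδ²)`. -/
theorem okamoto_inequality
    {Ω : Type*} [MeasurableSpace Ω] (P : Measure Ω) [IsProbabilityMeasure P]
    (n : ℕ) (hn : 0 < n) (p : ℝ) (hp0 : 0 ≤ p) (hp1 : p ≤ 1)
    (Z : Ω → ℕ) (hZ : Measurable Z)
    (hbin : ∀ k : ℕ, P {ω | Z ω = k}
      = ENNReal.ofReal ((n.choose k : ℝ) * p ^ k * (1 - p) ^ (n - k)))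
    (δ : ℝ) (hδ : 0 < δ) :
    P {ω | δ ≤ (Z ω : ℝ) / n - p} < ENNReal.ofReal (Real.exp (-2 * n * δ ^ 2)) := by
  have hn' : (0:ℝ) < n := by exact_mod_cast hn
  set f : ℕ → ℝ := fun k => (n.choose k : ℝ) * p ^ k * (1 - p) ^ (n - k) with hfdef
  have hf0 : ∀ k, 0 ≤ f k := fun k =>
    mul_nonneg (mul_nonneg (Nat.cast_nonneg _) (pow_nonneg hp0 _))
      (pow_nonneg (by linarith) _)
  set F : Finset ℕ := (Finset.range (n+1)).filter (fun k => δ ≤ (k:ℝ)/n - p) with hFdef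
  have hFsub : F ⊆ Finset.range (n+1) := Finset.filter_subset _ _
  have h0F : 0 ∉ F := by
    intro h
    have := (Finset.mem_filter.mp h).2
    simp only [Nat.cast_zero, zero_div] at this
    linarith
  -- measure bound
  have hmeas : P {ω | δ ≤ (Z ω : ℝ) / n - p} ≤ ENNReal.ofReal (∑ k ∈ F, f k) := by
    have hsub : {ω | δ ≤ (Z ω : ℝ) / n - p} ⊆
        (⋃ k ∈ F, {ω | Z ω = k}) ∪ (⋃ k : ℕ, {ω | Z ω = n + 1 + k}) := by
      intro ω hω
      by_cases h : Z ω ≤ n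
      · left
        refine Set.mem_biUnion ?_ rfl
        exact Finset.mem_filter.mpr ⟨Finset.mem_range.mpr (by omega), hω⟩
      · right
        refine Set.mem_iUnion.mpr ⟨Z ω - (n+1), ?_⟩
        simp only [Set.mem_setOf_eq]
        omega
    have hB : P (⋃ k : ℕ, {ω | Z ω = n + 1 + k}) = 0 := by
      refine measure_iUnion_null fun k => ?_
      rw [hbin]
      rw [Nat.choose_eq_zero_of_lt (by omega)]
      simp
    calc P {ω | δ ≤ (Z ω : ℝ) / n - p}
        ≤ P ((⋃ k ∈ F, {ω | Z ω = k}) ∪ (⋃ k : ℕ, {ω | Z ω = n + 1 + k})) :=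
          measure_mono hsub
      _ ≤ P (⋃ k ∈ F, {ω | Z ω = k}) + P (⋃ k : ℕ, {ω | Z ω = n + 1 + k}) :=
          measure_union_le _ _
      _ = P (⋃ k ∈ F, {ω | Z ω = k}) := by rw [hB, add_zero]
      _ ≤ ∑ k ∈ F, P {ω | Z ω = k} := measure_biUnion_finset_le _ _
      _ = ∑ k ∈ F, ENNReal.ofReal (f k) := by simp only [hbin, hfdef]
      _ = ENNReal.ofReal (∑ k ∈ F, f k) :=
          (ENNReal.ofReal_sum_of_nonneg fun k _ => hf0 k).symm
  -- real bound
  have key : ∑ k ∈ F, f k < Real.exp (-2 * n * δ ^ 2) := by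
    rcases eq_or_lt_of_le hp0 with h0 | h0
    · -- p = 0
      have : ∑ k ∈ F, f k = 0 := by
        refine Finset.sum_eq_zero fun k hk => ?_
        have hk0 : k ≠ 0 := fun h => h0F (h ▸ hk)
        simp only [hfdef, ← h0]
        rw [zero_pow hk0]
        ring
      rw [this]
      exact Real.exp_pos _
    rcases eq_or_lt_of_le hp1 with h1 | h1
    · -- p = 1
      have : ∑ k ∈ F, f k = 0 := by
        refine Finset.sum_eq_zero fun k hk => ?_
        exfalso
        obtain ⟨hkr, hkc⟩ := Finset.mem_filter.mp hk
        have hkn : (k:ℝ) ≤ n := by exact_mod_cast Nat.lt_succ_iff.mp (Finset.mem_range.mp hkr)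
        have : (k:ℝ)/n ≤ 1 := by rw [div_le_one hn']; exact hkn
        rw [h1] at hkc
        linarith
      rw [this]
      exact Real.exp_pos _
    -- main case 0 < p < 1
    have hq0 : (0:ℝ) < 1 - p := by linarith
    set t : ℝ := 4 * δ with htdef
    have ht0 : 0 < t := by positivity
    have hstep1 : ∑ k ∈ F, f k ≤ ∑ k ∈ F, f k * Real.exp (t * ((k:ℝ) - n * (p + δ))) := by
      refine Finset.sum_le_sum fun k hk => ?_
      have hkc := (Finset.mem_filter.mp hk).2
      have hk' : (n:ℝ) * (p + δ) ≤ k := by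
        have h' : δ + p ≤ (k:ℝ)/n := by linarith
        rw [le_div_iff₀ hn'] at h'
        linarith
      nth_rewrite 1 [← mul_one (f k)]
      exact mul_le_mul_of_nonneg_left (Real.one_le_exp (by nlinarith)) (hf0 k)
    have hstep2 : ∑ k ∈ F, f k * Real.exp (t * ((k:ℝ) - n * (p + δ)))
        < ∑ k ∈ Finset.range (n+1), f k * Real.exp (t * ((k:ℝ) - n * (p + δ))) := by
      refine Finset.sum_lt_sum_of_subset hFsub (Finset.mem_range.mpr (Nat.succ_pos n)) h0F
        ?_ fun j _ _ => mul_nonneg (hf0 j) (Real.exp_pos _).le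
      have : f 0 = (1 - p) ^ n := by simp [hfdef]
      rw [this]
      positivity
    have hstep3 : ∑ k ∈ Finset.range (n+1), f k * Real.exp (t * ((k:ℝ) - n * (p + δ)))
        = Real.exp (-(t * (n * (p + δ)))) * (p * Real.exp t + (1 - p)) ^ n := by
      rw [add_pow, Finset.mul_sum]
      refine Finset.sum_congr rfl fun k hk => ?_
      rw [show t * ((k:ℝ) - n * (p + δ)) = (k:ℝ) * t + -(t * (n * (p + δ))) by ring,
        Real.exp_add, Real.exp_nat_mul]
      simp only [hfdef]
      rw [mul_pow]
      ring
    have hstep4 : Real.exp (-(t * (n * (p + δ)))) * (p * Real.exp t + (1 - p)) ^ n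
        ≤ Real.exp (-(t * (n * (p + δ)))) * (Real.exp (t * p + t ^ 2 / 8)) ^ n := by
      have hbase : (0:ℝ) ≤ p * Real.exp t + (1 - p) := by positivity
      exact mul_le_mul_of_nonneg_left
        (pow_le_pow_left₀ hbase (bernoulli_mgf_le h0 h1 ht0.le) n) (Real.exp_pos _).le
    have hstep5 : Real.exp (-(t * (n * (p + δ)))) * (Real.exp (t * p + t ^ 2 / 8)) ^ n
        = Real.exp (-2 * n * δ ^ 2) := by
      rw [← Real.exp_nat_mul, ← Real.exp_add]
      congr 1
      rw [htdef]
      ring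
    calc ∑ k ∈ F, f k ≤ _ := hstep1
      _ < _ := hstep2
      _ = _ := hstep3
      _ ≤ _ := hstep4
      _ = _ := hstep5
  exact lt_of_le_of_lt hmeas
    ((ENNReal.ofReal_lt_ofReal_iff (Real.exp_pos _)).mpr key)
end

section
/- Fix 1 ≤ K ≤ M. Then almost surely, limsup_{n→∞} sup_{θ ∈ Θ'_{n,K}} (1/n)·R_n(J(θ)) ≤ 3M·u·2c_0. -/
open MeasureTheory ProbabilityTheory Filter Set
open scoped Classical Topology

/-- `Θ_n' = {θ ∈ Θ : L_min ≤ a_m ≤ L_max, c_n ≤ b_m ≤ L for all m, b_m ≤ c₀ for some m}`. -/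
def thetaN' (M : ℕ) (Lmin Lmax L c₀ cn : ℝ) : Set (EuclideanSpace ℝ (Fin M × Fin 3)) :=
  {θ ∈ mixParams M |
    (∀ m : Fin M, Lmin ≤ θ (m, 1) ∧ θ (m, 1) ≤ Lmax ∧ cn ≤ θ (m, 2) ∧ θ (m, 2) ≤ L) ∧
    ∃ m : Fin M, θ (m, 2) ≤ c₀}

/-- `Θ'_{n,K} = {θ ∈ Θ_n' : b_1 ≤ … ≤ b_K ≤ c₀ < b_{K+1} ≤ … ≤ b_M}`. -/
def thetaNK (M : ℕ) (Lmin Lmax L c₀ cn : ℝ) (K : ℕ) :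
    Set (EuclideanSpace ℝ (Fin M × Fin 3)) :=
  {θ ∈ thetaN' M Lmin Lmax L c₀ cn |
    (Monotone fun m : Fin M => θ (m, 2)) ∧
    ∀ m : Fin M, ((m : ℕ) < K → θ (m, 2) ≤ c₀) ∧ (K ≤ (m : ℕ) → c₀ < θ (m, 2))}

/-- `J(θ)`: the support of `Σ_{m=1}^K α_m f_m(x; η_m)`. -/
noncomputable def shortSupport (M K : ℕ) (θ : EuclideanSpace ℝ (Fin M × Fin 3)) :
    Set ℝ :=
  Function.support fun x =>
    ∑ m ∈ Finset.univ.filter (fun m : Fin M => (m : ℕ) < K),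
      θ (m, 0) * unifPdf (θ (m, 1)) (θ (m, 2)) x

/-- `R_n(V)`: the number of the first `n` observations lying in `V`. -/
noncomputable def countIn {Ω : Type*} (X : ℕ → Ω → ℝ) (ω : Ω) (n : ℕ) (V : Set ℝ) : ℕ :=
  ((Finset.range n).filter fun i => X i ω ∈ V).card

lemma countIn_cast_eq_sum {Ω : Type*} (X : ℕ → Ω → ℝ) (ω : Ω) (n : ℕ) (V : Set ℝ) :
    (countIn X ω n V : ℝ) = ∑ i ∈ Finset.range n, V.indicator (fun _ => (1:ℝ)) (X i ω) := by
  unfold countIn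
  rw [Finset.card_filter]
  push_cast
  refine Finset.sum_congr rfl fun i _ => ?_
  by_cases h : X i ω ∈ V <;> simp [h]

/-- **Lemma (bound on the fraction of observations in `J(θ)`).** Almost surely,
`limsup_n sup_{θ ∈ Θ'_{n,K}} (1/n) R_n(J(θ)) ≤ 3M·u·2c₀`. -/
theorem limsup_sup_countIn_shortSupport_le
    (M K : ℕ) (hM : 0 < M) (hK1 : 1 ≤ K) (hKM : K ≤ M)
    (θ₀ : EuclideanSpace ℝ (Fin M × Fin 3)) (hθ₀ : θ₀ ∈ mixParams M)
    (Lmin Lmax L : ℝ)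
    (hLmin : IsLeast (Set.range fun m : Fin M => θ₀ (m, 1) - θ₀ (m, 2)) Lmin)
    (hLmax : IsGreatest (Set.range fun m : Fin M => θ₀ (m, 1) + θ₀ (m, 2)) Lmax)
    (hL : L = Lmax - Lmin)
    (u : ℝ) (hu : IsGreatest (Set.range (mixPdf M θ₀)) u)
    (c₀ d : ℝ) (hc₀ : 0 < c₀) (hc₀e : 2 * c₀ < Real.exp (-1))
    (hd0 : 1 / 4 < d) (hd1 : d < 1)
    {Ω : Type*} [MeasurableSpace Ω] (P : Measure Ω) [IsProbabilityMeasure P]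
    (X : ℕ → Ω → ℝ) (hX : ∀ i, Measurable (X i))
    (hindep : iIndepFun X P)
    (hlaw : ∀ i, Measure.map (X i) P
      = volume.withDensity fun x => ENNReal.ofReal (mixPdf M θ₀ x)) :
    ∀ᵐ ω ∂P,
      Filter.limsup (fun n : ℕ =>
          sSup {y : ℝ | ∃ θ ∈ thetaNK M Lmin Lmax L c₀
              (c₀ * Real.exp (-(n : ℝ) ^ d)) K,
            y = (countIn X ω n (shortSupport M K θ) : ℝ) / n})
        atTop
      ≤ 3 * M * u * (2 * c₀) := by
  obtain ⟨hα0, hsum0, hb0⟩ := hθ₀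
  -- basic facts about the density and `u`
  have hfu : ∀ x, mixPdf M θ₀ x ≤ u := fun x => hu.2 ⟨x, rfl⟩
  have hu0 : 0 < u := by
    obtain ⟨m₀, hm₀⟩ : ∃ m : Fin M, 0 < θ₀ (m, 0) := by
      by_contra h
      push_neg at h
      have h0 : (∑ m : Fin M, θ₀ (m, 0)) = 0 :=
        Finset.sum_eq_zero fun m _ => le_antisymm (h m) (hα0 m)
      rw [hsum0] at h0; norm_num at h0
    have hb := hb0 m₀
    have h1 : θ₀ (m₀, 0) * unifPdf (θ₀ (m₀, 1)) (θ₀ (m₀, 2)) (θ₀ (m₀, 1))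
        ≤ mixPdf M θ₀ (θ₀ (m₀, 1)) := by
      refine Finset.single_le_sum (f := fun m : Fin M =>
        θ₀ (m, 0) * unifPdf (θ₀ (m, 1)) (θ₀ (m, 2)) (θ₀ (m₀, 1)))
        (fun m _ => ?_) (Finset.mem_univ m₀)
      refine mul_nonneg (hα0 m) ?_
      unfold unifPdf
      split
      · have := hb0 m; positivity
      · exact le_rfl
    have h2 : unifPdf (θ₀ (m₀, 1)) (θ₀ (m₀, 2)) (θ₀ (m₀, 1)) = 1 / (2 * θ₀ (m₀, 2)) := by
      unfold unifPdf
      rw [if_pos ⟨by linarith, by linarith⟩]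
    calc (0:ℝ) < θ₀ (m₀, 0) * (1 / (2 * θ₀ (m₀, 2))) := by positivity
      _ ≤ mixPdf M θ₀ (θ₀ (m₀, 1)) := by rw [← h2]; exact h1
      _ ≤ u := hfu _
  set μ : Measure ℝ := volume.withDensity fun x => ENNReal.ofReal (mixPdf M θ₀ x) with hμdef
  -- the grid of intervals
  set N : ℕ := ⌊L / c₀⌋₊ + 1 with hN
  set I : ℕ → Set ℝ :=
    fun j => Set.Ico (Lmin + j * c₀ - c₀) (Lmin + j * c₀ + 2 * c₀) with hIdef
  have hμI : ∀ j, (μ (I j)).toReal ≤ 3 * (u * c₀) := by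
    intro j
    have hvol : volume (I j) = ENNReal.ofReal (3 * c₀) := by
      rw [hIdef]
      simp only [Real.volume_Ico]
      ring_nf
    have hle : μ (I j) ≤ ENNReal.ofReal (u * (3 * c₀)) := by
      rw [hμdef, withDensity_apply _ measurableSet_Ico]
      calc ∫⁻ x in I j, ENNReal.ofReal (mixPdf M θ₀ x)
          ≤ ∫⁻ _ in I j, ENNReal.ofReal u :=
            lintegral_mono fun x => ENNReal.ofReal_le_ofReal (hfu x)
        _ = ENNReal.ofReal u * volume (I j) := by rw [setLIntegral_const]
        _ = ENNReal.ofReal (u * (3 * c₀)) := by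
            rw [hvol, ← ENNReal.ofReal_mul hu0.le]
    have := ENNReal.toReal_le_of_le_ofReal (by positivity) hle
    linarith
  -- strong law of large numbers for each grid interval
  have hslln : ∀ j : ℕ, ∀ᵐ ω ∂P, Tendsto (fun n : ℕ => (countIn X ω n (I j) : ℝ) / n)
      atTop (𝓝 ((μ (I j)).toReal)) := by
    intro j
    set g : ℝ → ℝ := (I j).indicator (fun _ => (1:ℝ)) with hg
    have hgmeas : Measurable g := measurable_const.indicator measurableSet_Ico
    set Y : ℕ → Ω → ℝ := fun i ω => g (X i ω) with hYdef
    have hident : ∀ i, IdentDistrib (Y i) (Y 0) P P := by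
      intro i
      have hXid : IdentDistrib (X i) (X 0) P P :=
        ⟨(hX i).aemeasurable, (hX 0).aemeasurable, by rw [hlaw i, hlaw 0]⟩
      exact hXid.comp hgmeas
    have hindep' : Pairwise (Function.onFun (IndepFun · · P) Y) := by
      intro i k hik
      exact (hindep.indepFun hik).comp hgmeas hgmeas
    have hint : Integrable (Y 0) P := by
      refine (integrable_const (1:ℝ)).mono' ((hgmeas.comp (hX 0)).aestronglyMeasurable) ?_
      filter_upwards with ω
      simp only [hYdef, hg, Real.norm_eq_abs]
      by_cases h : X 0 ω ∈ I j <;> simp [h]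
    have hE : (∫ ω, Y 0 ω ∂P) = (μ (I j)).toReal := by
      have h1 : (∫ ω, Y 0 ω ∂P) = ∫ x, g x ∂(Measure.map (X 0) P) :=
        (integral_map (hX 0).aemeasurable hgmeas.aestronglyMeasurable).symm
      rw [h1, hlaw 0, hg, integral_indicator_const _ measurableSet_Ico]
      rw [smul_eq_mul, mul_one]
      rfl
    have hsl := strong_law_ae_real Y hint hindep' hident
    filter_upwards [hsl] with ω hω
    rw [hE] at hω
    have heq : (fun n : ℕ => (countIn X ω n (I j) : ℝ) / n)
        = fun n : ℕ => (∑ i ∈ Finset.range n, Y i ω) / n := by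
      funext n
      rw [countIn_cast_eq_sum]
    rw [heq]
    exact hω
  -- assemble the almost-sure statement
  filter_upwards [MeasureTheory.ae_all_iff.2 hslln] with ω hω
  have hT0 : (0:ℝ) ≤ 3 * M * u * (2 * c₀) := by positivity
  refine Filter.limsup_le_of_le ?_ ?_
  · refine Filter.isCoboundedUnder_le_of_le (x := 0) atTop fun n => ?_
    refine Real.sSup_nonneg ?_
    rintro y ⟨θ, hθ, rfl⟩
    positivity
  · -- eventually, the fraction of points in each grid interval is at most `4 u c₀`
    have hev : ∀ᶠ n : ℕ in atTop, ∀ j ∈ Finset.range N,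
        (countIn X ω n (I j) : ℝ) / n ≤ 4 * (u * c₀) := by
      rw [Filter.eventually_all_finset]
      intro j _
      exact (hω j).eventually_le_const (by nlinarith [hμI j, mul_pos hu0 hc₀])
    filter_upwards [hev] with n hn
    refine Real.sSup_le ?_ hT0
    rintro y ⟨θ, hθ, rfl⟩
    obtain ⟨⟨⟨hαθ, hsumθ, hbθ⟩, hrange, -⟩, -, hsplit⟩ := hθ
    set jidx : Fin M → ℕ := fun m => ⌊(θ (m, 1) - Lmin) / c₀⌋₊ with hjidx
    set S : Finset (Fin M) := Finset.univ.filter (fun m : Fin M => (m : ℕ) < K) with hS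
    have hjN : ∀ m : Fin M, jidx m ∈ Finset.range N := by
      intro m
      obtain ⟨ha1, ha2, -, -⟩ := hrange m
      rw [Finset.mem_range, hN]
      have h1 : (θ (m, 1) - Lmin) / c₀ ≤ L / c₀ := by
        gcongr
        linarith [hL]
      have h2 := Nat.floor_le_floor h1
      simp only [hjidx]
      omega
    -- every point of `J(θ)` lies in one of `K` grid intervals
    have hcov : ∀ x ∈ shortSupport M K θ, ∃ m ∈ S, x ∈ I (jidx m) := by
      intro x hx
      have hx' : (∑ m ∈ S, θ (m, 0) * unifPdf (θ (m, 1)) (θ (m, 2)) x) ≠ 0 := hx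
      obtain ⟨m, hmS, hne⟩ := Finset.exists_ne_zero_of_sum_ne_zero hx'
      refine ⟨m, hmS, ?_⟩
      have hbpos : 0 < θ (m, 2) := hbθ m
      have hKm : (m : ℕ) < K := (Finset.mem_filter.1 hmS).2
      have hbc : θ (m, 2) ≤ c₀ := (hsplit m).1 hKm
      have hx1 : θ (m, 1) - θ (m, 2) ≤ x ∧ x < θ (m, 1) + θ (m, 2) := by
        by_contra h
        exact hne (by unfold unifPdf; rw [if_neg h, mul_zero])
      obtain ⟨ha1, ha2, -, -⟩ := hrange m
      have ht0 : (0:ℝ) ≤ (θ (m, 1) - Lmin) / c₀ := div_nonneg (by linarith) hc₀.le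
      have hfl : ((jidx m : ℕ) : ℝ) ≤ (θ (m, 1) - Lmin) / c₀ := Nat.floor_le ht0
      have hfl2 : (θ (m, 1) - Lmin) / c₀ < (jidx m : ℕ) + 1 := Nat.lt_floor_add_one _
      have hfl' : ((jidx m : ℕ) : ℝ) * c₀ ≤ θ (m, 1) - Lmin := by
        rw [← le_div_iff₀ hc₀]; exact hfl
      have hfl2' : θ (m, 1) - Lmin < ((jidx m : ℕ) : ℝ) * c₀ + c₀ := by
        have h3 := (div_lt_iff₀ hc₀).1 hfl2
        have h4 : (((jidx m : ℕ) : ℝ) + 1) * c₀ = ((jidx m : ℕ) : ℝ) * c₀ + c₀ := by ring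
        linarith
      refine ⟨?_, ?_⟩
      · linarith [hx1.1]
      · linarith [hx1.2]
    rcases Nat.eq_zero_or_pos n with hn0 | hnpos
    · subst hn0
      rw [Nat.cast_zero, div_zero]
      exact hT0
    have hsub : (Finset.range n).filter (fun i => X i ω ∈ shortSupport M K θ)
        ⊆ S.biUnion (fun m => (Finset.range n).filter (fun i => X i ω ∈ I (jidx m))) := by
      intro i hi
      rw [Finset.mem_filter] at hi
      obtain ⟨m, hmS, hxm⟩ := hcov _ hi.2
      rw [Finset.mem_biUnion]
      exact ⟨m, hmS, Finset.mem_filter.2 ⟨hi.1, hxm⟩⟩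
    have hcount : (countIn X ω n (shortSupport M K θ) : ℝ)
        ≤ ∑ m ∈ S, (countIn X ω n (I (jidx m)) : ℝ) := by
      have h1 : countIn X ω n (shortSupport M K θ)
          ≤ ∑ m ∈ S, countIn X ω n (I (jidx m)) := by
        unfold countIn
        have h2 := le_trans (Finset.card_le_card hsub) Finset.card_biUnion_le
        convert h2 using 2 <;> congr!
      exact_mod_cast h1
    have hn' : (0:ℝ) < n := by exact_mod_cast hnpos
    have hMuc : (0:ℝ) ≤ (M : ℝ) * (u * c₀) :=
      mul_nonneg (Nat.cast_nonneg M) (mul_nonneg hu0.le hc₀.le)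
    calc (countIn X ω n (shortSupport M K θ) : ℝ) / n
        ≤ (∑ m ∈ S, (countIn X ω n (I (jidx m)) : ℝ)) / n := by gcongr
      _ = ∑ m ∈ S, (countIn X ω n (I (jidx m)) : ℝ) / n := Finset.sum_div _ _ _
      _ ≤ ∑ m ∈ S, 4 * (u * c₀) := Finset.sum_le_sum fun m _ => hn _ (hjN m)
      _ = (S.card : ℝ) * (4 * (u * c₀)) := by rw [Finset.sum_const, nsmul_eq_mul]
      _ ≤ (M : ℝ) * (4 * (u * c₀)) := by
          have hcard : S.card ≤ M := le_trans (Finset.card_filter_le _ _) (by simp)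
          have hcard' : (S.card : ℝ) ≤ M := by exact_mod_cast hcard
          nlinarith [mul_nonneg hu0.le hc₀.le]
      _ ≤ 3 * M * u * (2 * c₀) := by nlinarith
end
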